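/- A function D: I_M^L → [0,1] is a discrete copula if and only if there exists an L-dimensional stochastic array A of order M such that D(i₁/M,…,i_L/M) = (1/M) Σ_{ν₁=1}^{i₁} ⋯ Σ_{ν_L=1}^{i_L} a_{ν₁…ν_L} for all i₁,…,i_L ∈ {0,1,…,M}. -/

import Mathlib

open Finset

/-- The sign `(-1)^{#{ℓ : ε ℓ = false}}` appearing in `L`-fold first-order differences. -/
def boxSign {L : ℕ} (ε : Fin L → Bool) : ℝ :=
  (-1 : ℝ) ^ (Finset.univ.filter (fun ℓ => ε ℓ = false)).card

namespace DCAux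

lemma boxSign_eq_prod {L : ℕ} (ε : Fin L → Bool) :
    boxSign ε = ∏ ℓ, (if ε ℓ then (1:ℝ) else -1) := by
  have h : ∀ ℓ, (if ε ℓ then (1:ℝ) else -1) = (-1:ℝ) ^ (if ε ℓ = false then 1 else 0) := by
    intro ℓ; cases hε : ε ℓ <;> simp
  simp_rw [h]
  rw [Finset.prod_pow_eq_pow_sum, boxSign, Finset.card_filter]

lemma boxSign_cons {L : ℕ} (e : Bool) (τ : Fin L → Bool) :
    boxSign (Fin.cons e τ) = (if e then (1:ℝ) else -1) * boxSign τ := by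
  simp only [boxSign_eq_prod, Fin.prod_univ_succ, Fin.cons_zero, Fin.cons_succ]

lemma boxSign_true {L : ℕ} : boxSign (fun _ : Fin L => true) = 1 := by
  simp [boxSign]

noncomputable def delta (L : ℕ) (D : (Fin L → ℕ) → ℝ) (ν : Fin L → ℕ) : ℝ :=
  ∑ ε : Fin L → Bool, boxSign ε * D (fun ℓ => if ε ℓ then ν ℓ + 1 else ν ℓ)

lemma sum_pi_succ {β : Type} [DecidableEq β] {n : ℕ} (t : Fin (n+1) → Finset β)
    (f : (Fin (n+1) → β) → ℝ) :
    ∑ ν ∈ Fintype.piFinset t, f ν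
      = ∑ x ∈ t 0, ∑ w ∈ Fintype.piFinset (fun ℓ => t ℓ.succ), f (Fin.cons x w) := by
  rw [← Finset.sum_product']
  refine Finset.sum_nbij' (fun ν => ((ν 0, fun ℓ => ν ℓ.succ) : β × (Fin n → β)))
    (fun p => Fin.cons p.1 p.2) ?_ ?_ ?_ ?_ ?_
  · intro ν hν
    simp only [Fintype.mem_piFinset] at hν
    simp only [Finset.mem_product, Fintype.mem_piFinset]
    exact ⟨hν 0, fun ℓ => hν ℓ.succ⟩
  · intro p hp
    simp only [Finset.mem_product, Fintype.mem_piFinset] at hp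
    simp only [Fintype.mem_piFinset]
    intro ℓ
    induction ℓ using Fin.cases with
    | zero => simpa using hp.1
    | succ k => simpa using hp.2 k
  · intro ν _
    funext ℓ
    induction ℓ using Fin.cases with
    | zero => simp
    | succ k => simp
  · intro p _; simp
  · intro ν _
    congr 1
    funext ℓ
    induction ℓ using Fin.cases with
    | zero => simp
    | succ k => simp

lemma sum_bool_succ {n : ℕ} (f : (Fin (n+1) → Bool) → ℝ) :
    ∑ ε : Fin (n+1) → Bool, f ε
      = ∑ τ : Fin n → Bool, f (Fin.cons true τ) + ∑ τ : Fin n → Bool, f (Fin.cons false τ) := by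
  have h := sum_pi_succ (fun _ : Fin (n+1) => (Finset.univ : Finset Bool)) f
  simp only [Fintype.piFinset_univ] at h
  rw [h, Fintype.sum_bool]

lemma telescope : ∀ (L : ℕ) (D : (Fin L → ℕ) → ℝ) (a b : Fin L → ℕ), (∀ ℓ, a ℓ ≤ b ℓ) →
    ∑ ν ∈ Fintype.piFinset (fun ℓ => Finset.Ico (a ℓ) (b ℓ)), delta L D ν
      = ∑ ε : Fin L → Bool, boxSign ε * D (fun ℓ => if ε ℓ then b ℓ else a ℓ)
  | 0, D, a, b, hab => by
      rw [Fintype.piFinset_of_isEmpty]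
      rw [Finset.univ_unique, Finset.sum_singleton, delta, Finset.univ_unique,
        Finset.sum_singleton, Finset.sum_singleton]
      congr 2
      · funext ℓ; exact ℓ.elim0
  | (L+1), D, a, b, hab => by
      have hdelta : ∀ (x : ℕ) (w : Fin L → ℕ),
          delta (L+1) D (Fin.cons x w)
            = delta L (fun v => D (Fin.cons (x+1) v)) w
              - delta L (fun v => D (Fin.cons x v)) w := by
        intro x w
        rw [delta, sum_bool_succ (f := fun ε => boxSign ε * D (fun ℓ => if ε ℓ then (Fin.cons x w : Fin (L+1) → ℕ) ℓ + 1 else (Fin.cons x w : Fin (L+1) → ℕ) ℓ))]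
        have h1 : ∀ τ : Fin L → Bool,
            boxSign (Fin.cons true τ) *
              D (fun ℓ => if (Fin.cons true τ : Fin (L+1) → Bool) ℓ then (Fin.cons x w : Fin (L+1) → ℕ) ℓ + 1 else (Fin.cons x w : Fin (L+1) → ℕ) ℓ)
            = boxSign τ * D (Fin.cons (x+1) (fun ℓ => if τ ℓ then w ℓ + 1 else w ℓ)) := by
          intro τ
          have harg : (fun ℓ => if (Fin.cons true τ : Fin (L+1) → Bool) ℓ then (Fin.cons x w : Fin (L+1) → ℕ) ℓ + 1
                else (Fin.cons x w : Fin (L+1) → ℕ) ℓ)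
              = Fin.cons (x+1) (fun ℓ => if τ ℓ then w ℓ + 1 else w ℓ) := by
            funext ℓ
            induction ℓ using Fin.cases with
            | zero => simp
            | succ k => simp
          rw [harg, boxSign_cons, if_pos rfl, one_mul]
        have h2 : ∀ τ : Fin L → Bool,
            boxSign (Fin.cons false τ) *
              D (fun ℓ => if (Fin.cons false τ : Fin (L+1) → Bool) ℓ then (Fin.cons x w : Fin (L+1) → ℕ) ℓ + 1 else (Fin.cons x w : Fin (L+1) → ℕ) ℓ)
            = -(boxSign τ * D (Fin.cons x (fun ℓ => if τ ℓ then w ℓ + 1 else w ℓ))) := by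
          intro τ
          have harg : (fun ℓ => if (Fin.cons false τ : Fin (L+1) → Bool) ℓ then (Fin.cons x w : Fin (L+1) → ℕ) ℓ + 1
                else (Fin.cons x w : Fin (L+1) → ℕ) ℓ)
              = Fin.cons x (fun ℓ => if τ ℓ then w ℓ + 1 else w ℓ) := by
            funext ℓ
            induction ℓ using Fin.cases with
            | zero => simp
            | succ k => simp
          rw [harg, boxSign_cons, if_neg (by simp)]; ring
        rw [Finset.sum_congr rfl (fun τ _ => h1 τ), Finset.sum_congr rfl (fun τ _ => h2 τ),
          Finset.sum_neg_distrib, delta, delta]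
        ring
      rw [sum_pi_succ]
      have hF : ∀ x : ℕ,
          ∑ w ∈ Fintype.piFinset (fun ℓ : Fin L => Finset.Ico (a ℓ.succ) (b ℓ.succ)),
            delta L (fun v => D (Fin.cons x v)) w
          = ∑ τ : Fin L → Bool, boxSign τ *
              D (Fin.cons x (fun ℓ => if τ ℓ then b ℓ.succ else a ℓ.succ)) := by
        intro x
        exact telescope L (fun v => D (Fin.cons x v)) (fun ℓ => a ℓ.succ) (fun ℓ => b ℓ.succ)
          (fun ℓ => hab ℓ.succ)
      set F : ℕ → ℝ := fun x => ∑ τ : Fin L → Bool, boxSign τ *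
          D (Fin.cons x (fun ℓ => if τ ℓ then b ℓ.succ else a ℓ.succ)) with hFdef
      have hL : ∑ x ∈ Finset.Ico (a 0) (b 0),
          ∑ w ∈ Fintype.piFinset (fun ℓ : Fin L => Finset.Ico (a ℓ.succ) (b ℓ.succ)),
            delta (L+1) D (Fin.cons x w) = F (b 0) - F (a 0) := by
        have : ∀ x ∈ Finset.Ico (a 0) (b 0),
            ∑ w ∈ Fintype.piFinset (fun ℓ : Fin L => Finset.Ico (a ℓ.succ) (b ℓ.succ)),
              delta (L+1) D (Fin.cons x w) = F (x+1) - F x := by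
          intro x _
          rw [Finset.sum_congr rfl (fun w _ => hdelta x w), Finset.sum_sub_distrib, hF, hF]
        rw [Finset.sum_congr rfl this, Finset.sum_Ico_eq_sub _ (hab 0),
          Finset.sum_range_sub F, Finset.sum_range_sub F]
        ring
      rw [hL, sum_bool_succ (f := fun ε => boxSign ε * D (fun ℓ => if ε ℓ then b ℓ else a ℓ))]
      have h1 : ∀ τ : Fin L → Bool,
          boxSign (Fin.cons true τ) * D (fun ℓ => if (Fin.cons true τ : Fin (L+1) → Bool) ℓ then b ℓ else a ℓ)
          = boxSign τ * D (Fin.cons (b 0) (fun ℓ => if τ ℓ then b ℓ.succ else a ℓ.succ)) := by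
        intro τ
        have harg : (fun ℓ => if (Fin.cons true τ : Fin (L+1) → Bool) ℓ then b ℓ else a ℓ)
            = Fin.cons (b 0) (fun ℓ => if τ ℓ then b ℓ.succ else a ℓ.succ) := by
          funext ℓ
          induction ℓ using Fin.cases with
          | zero => simp
          | succ k => simp
        rw [harg, boxSign_cons, if_pos rfl, one_mul]
      have h2 : ∀ τ : Fin L → Bool,
          boxSign (Fin.cons false τ) * D (fun ℓ => if (Fin.cons false τ : Fin (L+1) → Bool) ℓ then b ℓ else a ℓ)
          = -(boxSign τ * D (Fin.cons (a 0) (fun ℓ => if τ ℓ then b ℓ.succ else a ℓ.succ))) := by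
        intro τ
        have harg : (fun ℓ => if (Fin.cons false τ : Fin (L+1) → Bool) ℓ then b ℓ else a ℓ)
            = Fin.cons (a 0) (fun ℓ => if τ ℓ then b ℓ.succ else a ℓ.succ) := by
          funext ℓ
          induction ℓ using Fin.cases with
          | zero => simp
          | succ k => simp
        rw [harg, boxSign_cons, if_neg (by simp)]; ring
      rw [Finset.sum_congr rfl (fun τ _ => h1 τ), Finset.sum_congr rfl (fun τ _ => h2 τ),
        Finset.sum_neg_distrib, hFdef]
      ring


lemma indicator_forall_eq_prod {L : ℕ} (p : Fin L → Prop) [∀ ℓ, Decidable (p ℓ)] :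
    (if ∀ ℓ, p ℓ then (1:ℝ) else 0) = ∏ ℓ, (if p ℓ then (1:ℝ) else 0) := by
  by_cases h : ∀ ℓ, p ℓ
  · rw [if_pos h, Finset.prod_congr rfl (g := fun _ => (1:ℝ)) (fun ℓ _ => if_pos (h ℓ))]
    simp
  · push_neg at h
    obtain ⟨ℓ, hℓ⟩ := h
    rw [if_neg (fun hh => hℓ (hh ℓ))]
    exact (Finset.prod_eq_zero (Finset.mem_univ ℓ) (by rw [if_neg hℓ])).symm

lemma sum_ite_fin_pi {M L : ℕ} (hM : 0 < M) (g : (Fin L → ℕ) → ℝ) (a b : Fin L → ℕ)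
    (hb : ∀ ℓ, b ℓ ≤ M) :
    ∑ ν : Fin L → Fin M,
        (if ∀ ℓ, a ℓ ≤ (ν ℓ : ℕ) ∧ (ν ℓ : ℕ) < b ℓ then g (fun ℓ => (ν ℓ : ℕ)) else 0)
      = ∑ μ ∈ Fintype.piFinset (fun ℓ => Finset.Ico (a ℓ) (b ℓ)), g μ := by
  rw [Finset.sum_ite, Finset.sum_const, smul_zero, add_zero]
  refine Finset.sum_nbij' (fun ν => fun ℓ => ((ν ℓ : ℕ)))
    (fun μ => fun ℓ => (⟨μ ℓ % M, Nat.mod_lt _ hM⟩ : Fin M)) ?_ ?_ ?_ ?_ ?_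
  · intro ν hν
    simp only [Finset.mem_filter, Finset.mem_univ, true_and] at hν
    simp only [Fintype.mem_piFinset, Finset.mem_Ico]
    exact hν
  · intro μ hμ
    simp only [Fintype.mem_piFinset, Finset.mem_Ico] at hμ
    simp only [Finset.mem_filter, Finset.mem_univ, true_and]
    intro ℓ
    rw [Nat.mod_eq_of_lt (lt_of_lt_of_le (hμ ℓ).2 (hb ℓ))]
    exact hμ ℓ
  · intro ν _
    funext ℓ
    exact Fin.ext (Nat.mod_eq_of_lt (ν ℓ).isLt)
  · intro μ hμ
    simp only [Fintype.mem_piFinset, Finset.mem_Ico] at hμ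
    funext ℓ
    exact Nat.mod_eq_of_lt (lt_of_lt_of_le (hμ ℓ).2 (hb ℓ))
  · intro ν _; rfl

lemma sum_indicator_lt {M k : ℕ} (hk : k ≤ M) :
    ∑ j : Fin M, (if (j : ℕ) < k then (1:ℝ) else 0) = k := by
  rw [Fin.sum_univ_eq_sum_range (fun x => if x < k then (1:ℝ) else 0) M,
    ← Finset.sum_filter]
  have h : (Finset.range M).filter (fun x => x < k) = Finset.range k := by
    ext x; simp only [Finset.mem_filter, Finset.mem_range]; omega
  rw [h, Finset.sum_const, Finset.card_range, nsmul_eq_mul, mul_one]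


end DCAux

/-- `D` is a discrete copula on `I_M^L`: the lattice point `(i₁/M, …, i_L/M)` is encoded
by an index vector `i : Fin L → ℕ` with `i ℓ ≤ M`.  The conditions are: values in `[0,1]`,
groundedness (D1), uniform margins (D2), and `L`-increasingness over unit lattice boxes (D3). -/
def IsDiscreteCopula (M L : ℕ) (D : (Fin L → ℕ) → ℝ) : Prop :=
  (∀ i : Fin L → ℕ, (∀ ℓ, i ℓ ≤ M) → D i ∈ Set.Icc (0 : ℝ) 1) ∧
  (∀ i : Fin L → ℕ, (∀ ℓ, i ℓ ≤ M) → (∃ ℓ, i ℓ = 0) → D i = 0) ∧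
  (∀ ℓ : Fin L, ∀ k : ℕ, k ≤ M →
    D (fun l => if l = ℓ then k else M) = (k : ℝ) / M) ∧
  (∀ i : Fin L → ℕ, (∀ ℓ, 1 ≤ i ℓ ∧ i ℓ ≤ M) →
    0 ≤ ∑ ε : Fin L → Bool,
        boxSign ε * D (fun ℓ => if ε ℓ then i ℓ else i ℓ - 1))

/-- An `L`-dimensional stochastic array of order `M`: nonnegative entries (indexed by
`ν : Fin L → Fin M`, where `ν ℓ` encodes the index `ν ℓ + 1 ∈ {1,…,M}`), and every line sum
(fixing one index and summing over the others) equals `1`. -/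
def IsStochasticArray (M L : ℕ) (A : (Fin L → Fin M) → ℝ) : Prop :=
  (∀ ν, 0 ≤ A ν) ∧
  (∀ ℓ : Fin L, ∀ j : Fin M,
    ∑ ν : Fin L → Fin M, (if ν ℓ = j then A ν else 0) = 1)

/-- A permutation array: a stochastic array all of whose entries lie in `{0, 1}`. -/
def IsPermutationArray (M L : ℕ) (A : (Fin L → Fin M) → ℝ) : Prop :=
  IsStochasticArray M L A ∧ ∀ ν, A ν = 0 ∨ A ν = 1

/-- The normalized cumulative sum `(1/M) Σ_{ν₁ ≤ i₁} ⋯ Σ_{ν_L ≤ i_L} a_{ν₁…ν_L}`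
(with `ν ℓ + 1 ≤ i ℓ` in the `Fin M` encoding; empty sums are zero). -/
noncomputable def cumSum (M L : ℕ) (A : (Fin L → Fin M) → ℝ) (i : Fin L → ℕ) : ℝ :=
  (1 / (M : ℝ)) * ∑ ν : Fin L → Fin M, (if ∀ ℓ, (ν ℓ : ℕ) < i ℓ then A ν else 0)

/-- `D` is a discrete copula iff it is the cumulative sum of some
`L`-dimensional stochastic array of order `M`. -/

theorem discreteCopula_iff_stochasticArray (M L : ℕ) (hM : 0 < M) (hL : 2 ≤ L)
    (D : (Fin L → ℕ) → ℝ) :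
    IsDiscreteCopula M L D ↔
      ∃ A : (Fin L → Fin M) → ℝ, IsStochasticArray M L A ∧
        ∀ i : Fin L → ℕ, (∀ ℓ, i ℓ ≤ M) → D i = cumSum M L A i := by
  have hMne : (M:ℝ) ≠ 0 := Nat.cast_ne_zero.2 hM.ne'
  constructor
  · rintro ⟨h1, h2, h3, h4⟩
    refine ⟨fun ν => M * DCAux.delta L D (fun ℓ => (ν ℓ : ℕ)), ⟨?_, ?_⟩, ?_⟩
    · -- nonnegativity
      intro ν
      have h := h4 (fun ℓ => (ν ℓ : ℕ) + 1)
        (fun ℓ => ⟨Nat.le_add_left 1 _, Nat.succ_le_of_lt (ν ℓ).isLt⟩)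
      have he : DCAux.delta L D (fun ℓ => (ν ℓ:ℕ))
          = ∑ ε : Fin L → Bool, boxSign ε *
              D (fun ℓ => if ε ℓ then (ν ℓ:ℕ) + 1 else ((ν ℓ:ℕ) + 1) - 1) := by
        rw [DCAux.delta]
        apply Finset.sum_congr rfl
        intro ε _
        congr 1
      exact mul_nonneg (Nat.cast_nonneg M) (he ▸ h)
    · -- line sums
      intro ℓ₀ j
      set a : Fin L → ℕ := fun ℓ => if ℓ = ℓ₀ then (j:ℕ) else 0 with ha
      set b : Fin L → ℕ := fun ℓ => if ℓ = ℓ₀ then (j:ℕ)+1 else M with hb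
      have hbM : ∀ ℓ, b ℓ ≤ M := by
        intro ℓ; rw [hb]; dsimp only; split_ifs
        · exact Nat.succ_le_of_lt j.isLt
        · exact le_refl M
      have hab : ∀ ℓ, a ℓ ≤ b ℓ := by
        intro ℓ; rw [ha, hb]; dsimp only; split_ifs
        · omega
        · exact Nat.zero_le M
      have hcond : ∀ ν : Fin L → Fin M,
          (ν ℓ₀ = j) ↔ (∀ ℓ, a ℓ ≤ (ν ℓ:ℕ) ∧ (ν ℓ:ℕ) < b ℓ) := by
        intro ν
        constructor
        · intro h ℓ
          rw [ha, hb]; dsimp only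
          by_cases hℓ : ℓ = ℓ₀
          · subst hℓ; rw [h]; simp
          · simp [hℓ]
        · intro h
          have := h ℓ₀
          rw [ha, hb] at this
          simp only [if_pos] at this
          exact Fin.ext (by omega)
      calc ∑ ν : Fin L → Fin M,
            (if ν ℓ₀ = j then (M:ℝ) * DCAux.delta L D (fun ℓ => (ν ℓ:ℕ)) else 0)
          = ∑ ν : Fin L → Fin M, (if ∀ ℓ, a ℓ ≤ (ν ℓ:ℕ) ∧ (ν ℓ:ℕ) < b ℓ then
              (M:ℝ) * DCAux.delta L D (fun ℓ => (ν ℓ:ℕ)) else 0) := by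
            apply Finset.sum_congr rfl
            intro ν _
            exact if_congr (hcond ν) rfl rfl
        _ = ∑ μ ∈ Fintype.piFinset (fun ℓ => Finset.Ico (a ℓ) (b ℓ)),
              (M:ℝ) * DCAux.delta L D μ :=
            DCAux.sum_ite_fin_pi hM (fun μ => (M:ℝ) * DCAux.delta L D μ) a b hbM
        _ = (M:ℝ) * ∑ μ ∈ Fintype.piFinset (fun ℓ => Finset.Ico (a ℓ) (b ℓ)),
              DCAux.delta L D μ := by rw [Finset.mul_sum]
        _ = (M:ℝ) * ∑ ε : Fin L → Bool,
              boxSign ε * D (fun ℓ => if ε ℓ then b ℓ else a ℓ) := by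
            rw [DCAux.telescope L D a b hab]
        _ = 1 := by
            set ε₂ : Fin L → Bool := fun ℓ => if ℓ = ℓ₀ then false else true with hε₂
            have hsub : ∑ ε : Fin L → Bool, boxSign ε * D (fun ℓ => if ε ℓ then b ℓ else a ℓ)
                = ∑ ε ∈ ({(fun _ => true), ε₂} : Finset (Fin L → Bool)),
                    boxSign ε * D (fun ℓ => if ε ℓ then b ℓ else a ℓ) := by
              symm
              apply Finset.sum_subset (Finset.subset_univ _)
              intro ε _ hε
              have hex : ∃ ℓ, ℓ ≠ ℓ₀ ∧ ε ℓ = false := by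
                by_contra hc
                push_neg at hc
                apply hε
                simp only [Finset.mem_insert, Finset.mem_singleton]
                cases hε0 : ε ℓ₀ with
                | true =>
                  left; funext ℓ
                  by_cases hh : ℓ = ℓ₀
                  · rw [hh, hε0]
                  · exact (by simpa using hc ℓ hh)
                | false =>
                  right; funext ℓ
                  rw [hε₂]; dsimp only
                  by_cases hh : ℓ = ℓ₀
                  · rw [hh, hε0, if_pos rfl]
                  · rw [if_neg hh]; exact (by simpa using hc ℓ hh)
              obtain ⟨ℓ, hℓne, hℓf⟩ := hex
              have hz : D (fun l => if ε l then b l else a l) = 0 := by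
                apply h2
                · intro l; split_ifs
                  · exact hbM l
                  · exact le_trans (hab l) (hbM l)
                · refine ⟨ℓ, ?_⟩
                  rw [hℓf]
                  simp [ha, hℓne]
              rw [hz, mul_zero]
            rw [hsub, Finset.sum_insert (by
                simp only [Finset.mem_singleton]
                intro hcontra
                have := congrFun hcontra ℓ₀
                rw [hε₂] at this; simp at this), Finset.sum_singleton]
            have harg1 : (fun ℓ => if (fun _ : Fin L => true) ℓ then b ℓ else a ℓ)
                = fun l => if l = ℓ₀ then (j:ℕ)+1 else M := by
              funext l; rw [if_pos rfl, hb]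
            have harg2 : (fun ℓ => if ε₂ ℓ then b ℓ else a ℓ)
                = fun l => if l = ℓ₀ then (j:ℕ) else M := by
              funext l
              rw [hε₂]; dsimp only
              by_cases hh : l = ℓ₀
              · simp only [if_pos hh, Bool.false_eq_true, if_false]
                rw [ha]; dsimp only; rw [if_pos hh]
              · simp only [if_neg hh, eq_self_iff_true, if_true]; rw [hb]; dsimp only; rw [if_neg hh]
            have hsign2 : boxSign ε₂ = -1 := by
              have hf : (Finset.univ.filter fun ℓ => ε₂ ℓ = false) = {ℓ₀} := by
                ext ℓ
                simp only [Finset.mem_filter, Finset.mem_univ, true_and, Finset.mem_singleton,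
                  hε₂]
                by_cases hh : ℓ = ℓ₀ <;> simp [hh]
              rw [boxSign, hf, Finset.card_singleton, pow_one]
            rw [harg1, harg2, DCAux.boxSign_true, hsign2,
              h3 ℓ₀ ((j:ℕ)+1) (Nat.succ_le_of_lt j.isLt), h3 ℓ₀ (j:ℕ) (le_of_lt j.isLt)]
            push_cast
            field_simp
            ring
    · -- cumulative sums reproduce D
      intro i hi
      rw [cumSum]
      have hstep : ∑ ν : Fin L → Fin M,
          (if ∀ ℓ, (ν ℓ:ℕ) < i ℓ then (M:ℝ) * DCAux.delta L D (fun ℓ => (ν ℓ:ℕ)) else 0)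
          = (M:ℝ) * D i := by
        calc ∑ ν : Fin L → Fin M,
            (if ∀ ℓ, (ν ℓ:ℕ) < i ℓ then (M:ℝ) * DCAux.delta L D (fun ℓ => (ν ℓ:ℕ)) else 0)
            = ∑ ν : Fin L → Fin M, (if ∀ ℓ, (fun _ => 0 : Fin L → ℕ) ℓ ≤ (ν ℓ:ℕ) ∧ (ν ℓ:ℕ) < i ℓ
                then (M:ℝ) * DCAux.delta L D (fun ℓ => (ν ℓ:ℕ)) else 0) := by
              apply Finset.sum_congr rfl
              intro ν _
              exact if_congr (by simp) rfl rfl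
          _ = ∑ μ ∈ Fintype.piFinset (fun ℓ => Finset.Ico ((fun _ => 0 : Fin L → ℕ) ℓ) (i ℓ)),
                (M:ℝ) * DCAux.delta L D μ :=
              DCAux.sum_ite_fin_pi hM (fun μ => (M:ℝ) * DCAux.delta L D μ) (fun _ => 0) i hi
          _ = (M:ℝ) * ∑ μ ∈ Fintype.piFinset (fun ℓ => Finset.Ico ((fun _ => 0 : Fin L → ℕ) ℓ) (i ℓ)),
                DCAux.delta L D μ := by rw [Finset.mul_sum]
          _ = (M:ℝ) * ∑ ε : Fin L → Bool,
                boxSign ε * D (fun ℓ => if ε ℓ then i ℓ else (fun _ => 0 : Fin L → ℕ) ℓ) := by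
              rw [DCAux.telescope L D (fun _ => 0) i (fun ℓ => Nat.zero_le _)]
          _ = (M:ℝ) * D i := by
              congr 1
              rw [Finset.sum_eq_single (fun _ : Fin L => true)]
              · rw [DCAux.boxSign_true, one_mul]
                congr 1
              · intro ε _ hne
                have hex : ∃ ℓ, ε ℓ = false := by
                  by_contra hc
                  push_neg at hc
                  exact hne (funext fun ℓ => (by simpa using hc ℓ))
                obtain ⟨ℓ, hℓ⟩ := hex
                have hz : D (fun l => if ε l then i l else 0) = 0 := by
                  apply h2
                  · intro l; split_ifs
                    · exact hi l
                    · exact Nat.zero_le M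
                  · exact ⟨ℓ, by rw [hℓ]; simp⟩
                rw [hz, mul_zero]
              · intro hmem; exact absurd (Finset.mem_univ _) hmem
      rw [hstep]
      field_simp
  · rintro ⟨A, ⟨hA0, hA1⟩, hDA⟩
    have hL1 : 0 < L := by omega
    set ℓ₀ : Fin L := ⟨0, hL1⟩ with hℓ₀
    have htot : ∑ ν : Fin L → Fin M, A ν = M := by
      calc ∑ ν : Fin L → Fin M, A ν
          = ∑ ν : Fin L → Fin M, ∑ j : Fin M, (if ν ℓ₀ = j then A ν else 0) := by
            apply Finset.sum_congr rfl
            intro ν _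
            rw [Finset.sum_ite_eq Finset.univ (ν ℓ₀) (fun _ => A ν)]
            simp
        _ = ∑ j : Fin M, ∑ ν : Fin L → Fin M, (if ν ℓ₀ = j then A ν else 0) :=
            Finset.sum_comm
        _ = ∑ _j : Fin M, (1:ℝ) := Finset.sum_congr rfl (fun j _ => hA1 ℓ₀ j)
        _ = M := by simp
    refine ⟨?_, ?_, ?_, ?_⟩
    · intro i hi
      rw [hDA i hi, cumSum]
      constructor
      · apply mul_nonneg (by positivity)
        apply Finset.sum_nonneg
        intro ν _
        split_ifs
        · exact hA0 ν
        · exact le_refl 0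
      · have hS : ∑ ν : Fin L → Fin M, (if ∀ ℓ, (ν ℓ:ℕ) < i ℓ then A ν else 0) ≤ M :=
          le_trans (Finset.sum_le_sum (fun ν _ => by
            split_ifs
            · exact le_refl _
            · exact hA0 ν)) (le_of_eq htot)
        calc (1/(M:ℝ)) * ∑ ν : Fin L → Fin M, (if ∀ ℓ, (ν ℓ:ℕ) < i ℓ then A ν else 0)
            ≤ (1/(M:ℝ)) * M := by
              apply mul_le_mul_of_nonneg_left hS (by positivity)
          _ = 1 := by field_simp
    · intro i hi h0
      obtain ⟨ℓ, hℓ⟩ := h0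
      rw [hDA i hi, cumSum]
      have hz : ∀ ν : Fin L → Fin M, (if ∀ l, (ν l:ℕ) < i l then A ν else 0) = 0 := by
        intro ν
        rw [if_neg]
        intro hh
        have := hh ℓ
        omega
      rw [Finset.sum_congr rfl (fun ν _ => hz ν), Finset.sum_const_zero, mul_zero]
    · intro ℓ k hk
      have hi : ∀ l, (fun l => if l = ℓ then k else M) l ≤ M := by
        intro l; dsimp only; split_ifs
        · exact hk
        · exact le_refl M
      rw [hDA _ hi, cumSum]
      have hc : ∀ ν : Fin L → Fin M,
          (if ∀ l, (ν l:ℕ) < (if l = ℓ then k else M) then A ν else 0)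
          = ∑ j : Fin M, (if ν ℓ = j then (if (j:ℕ) < k then A ν else 0) else 0) := by
        intro ν
        rw [Finset.sum_ite_eq Finset.univ (ν ℓ) (fun j => if (j:ℕ) < k then A ν else 0)]
        simp only [Finset.mem_univ, if_true]
        apply if_congr _ rfl rfl
        constructor
        · intro h
          have := h ℓ
          simpa using this
        · intro h l
          by_cases hl : l = ℓ
          · subst hl; simpa using h
          · rw [if_neg hl]; exact (ν l).isLt
      rw [Finset.sum_congr rfl (fun ν _ => hc ν), Finset.sum_comm]
      have heval : ∀ j : Fin M,
          ∑ ν : Fin L → Fin M, (if ν ℓ = j then (if (j:ℕ) < k then A ν else 0) else 0)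
          = if (j:ℕ) < k then (1:ℝ) else 0 := by
        intro j
        by_cases hj : (j:ℕ) < k
        · simp only [hj, if_true]
          exact hA1 ℓ j
        · simp only [hj, if_false]
          apply Finset.sum_eq_zero
          intro ν _
          split_ifs <;> rfl
      rw [Finset.sum_congr rfl (fun j _ => heval j), DCAux.sum_indicator_lt hk]
      rw [one_div, inv_mul_eq_div]
    · intro i hi
      have hcorner : ∀ ε : Fin L → Bool, ∀ l, (if ε l then i l else i l - 1) ≤ M := by
        intro ε l
        split_ifs
        · exact (hi l).2
        · exact le_trans (Nat.sub_le _ _) (hi l).2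
      have hswap : ∑ ε : Fin L → Bool, boxSign ε * D (fun l => if ε l then i l else i l - 1)
          = ∑ ν : Fin L → Fin M, ∑ ε : Fin L → Bool,
              (1/(M:ℝ)) * (boxSign ε *
                (if ∀ l, (ν l:ℕ) < (if ε l then i l else i l - 1) then A ν else 0)) := by
        rw [← Finset.sum_comm]
        apply Finset.sum_congr rfl
        intro ε _
        rw [hDA _ (hcorner ε), cumSum, Finset.mul_sum, Finset.mul_sum]
        apply Finset.sum_congr rfl
        intro ν _
        ring
      rw [hswap]
      apply Finset.sum_nonneg
      intro ν _
      rw [← Finset.mul_sum]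
      apply mul_nonneg (by positivity)
      have key : ∑ ε : Fin L → Bool,
          boxSign ε * (if ∀ l, (ν l:ℕ) < (if ε l then i l else i l - 1) then A ν else 0)
          = (∏ l, ((if (ν l:ℕ) < i l then (1:ℝ) else 0)
              - (if (ν l:ℕ) < i l - 1 then (1:ℝ) else 0))) * A ν := by
        have h1 : ∀ ε : Fin L → Bool,
            boxSign ε * (if ∀ l, (ν l:ℕ) < (if ε l then i l else i l - 1) then A ν else 0)
            = (∏ l, ((if ε l then (1:ℝ) else -1)
                * (if (ν l:ℕ) < (if ε l then i l else i l - 1) then (1:ℝ) else 0))) * A ν := by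
          intro ε
          rw [Finset.prod_mul_distrib, ← DCAux.boxSign_eq_prod,
            ← DCAux.indicator_forall_eq_prod (fun l => (ν l:ℕ) < (if ε l then i l else i l - 1))]
          split_ifs <;> ring
        rw [Finset.sum_congr rfl (fun ε _ => h1 ε), ← Finset.sum_mul]
        congr 1
        have hps := Finset.prod_univ_sum (fun _ : Fin L => (Finset.univ : Finset Bool))
          (fun l e => (if e then (1:ℝ) else -1)
            * (if (ν l:ℕ) < (if e then i l else i l - 1) then (1:ℝ) else 0))
        rw [Fintype.piFinset_univ] at hps
        rw [← hps]
        apply Finset.prod_congr rfl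
        intro l _
        rw [Fintype.sum_bool]
        simp only [↓reduceIte, Bool.false_eq_true, if_false]
        ring
      rw [key]
      apply mul_nonneg _ (hA0 ν)
      apply Finset.prod_nonneg
      intro l _
      by_cases hlt : (ν l:ℕ) < i l
      · by_cases hlt2 : (ν l:ℕ) < i l - 1 <;> simp [hlt, hlt2]
      · have hlt2 : ¬((ν l:ℕ) < i l - 1) := by omega
        simp [hlt, hlt2]
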